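/- Let x > 0, R > 0, θ ∈ ℝ, and set η = (R + 1/R)·cos θ + i·((R − 1/R)·sin θ − x). Then |η|² = R² + R⁻² + 2·cos(2θ) − 2·x·(R − 1/R)·sin θ + x². In particular, if R ≥ 1 and θ ∈ [0, π/4], then |η|² ≥ R² − √2·x·R + x² ≥ (1 − √2/2)·(R² + x²). -/

import Mathlib

/-- For `η = (R + 1/R)cos θ + i((R − 1/R)sin θ − x)` with `R, x > 0`,
`|η|² = R² + R⁻² + 2cos 2θ − 2x(R − 1/R)sin θ + x²`; and if `R ≥ 1` and
`θ ∈ [0, π/4]` then `|η|² ≥ R² − √2·xR + x² ≥ (1 − √2/2)(R² + x²)`. -/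
theorem stmt9 (x R θ : ℝ) (hx : 0 < x) (hR : 0 < R) :
    let η : ℂ := ((R + 1 / R) * Real.cos θ : ℝ) +
      Complex.I * (((R - 1 / R) * Real.sin θ - x : ℝ) : ℂ)
    (‖η‖ ^ 2
        = R ^ 2 + (1 / R) ^ 2 + 2 * Real.cos (2 * θ)
          - 2 * x * (R - 1 / R) * Real.sin θ + x ^ 2) ∧
    (1 ≤ R → θ ∈ Set.Icc 0 (Real.pi / 4) →
      (R ^ 2 - Real.sqrt 2 * x * R + x ^ 2 ≤ ‖η‖ ^ 2 ∧
        (1 - Real.sqrt 2 / 2) * (R ^ 2 + x ^ 2)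
          ≤ R ^ 2 - Real.sqrt 2 * x * R + x ^ 2)) := by
  intro η
  have habs : ‖η‖ ^ 2
      = R ^ 2 + (1 / R) ^ 2 + 2 * Real.cos (2 * θ)
        - 2 * x * (R - 1 / R) * Real.sin θ + x ^ 2 := by
    have : η = (((R + 1 / R) * Real.cos θ : ℝ) : ℂ)
        + (((R - 1 / R) * Real.sin θ - x : ℝ) : ℂ) * Complex.I := by
      simp [η]; ring
    rw [this, Complex.sq_norm, Complex.normSq_add_mul_I, Real.cos_two_mul]
    have hinv : R * (1 / R) = 1 := mul_one_div_cancel (ne_of_gt hR)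
    linear_combination (R ^ 2 + (1 / R) ^ 2 - 2) * Real.sin_sq_add_cos_sq θ
      + (2 * Real.cos θ ^ 2 - 2 * Real.sin θ ^ 2) * hinv
  refine ⟨habs, fun hR1 hθ => ?_⟩
  obtain ⟨hθ0, hθ1⟩ := hθ
  have hs2 : Real.sqrt 2 ^ 2 = 2 := Real.sq_sqrt (by norm_num)
  have hs2pos : 0 < Real.sqrt 2 := by positivity
  constructor
  · rw [habs]
    have hsin0 : 0 ≤ Real.sin θ := Real.sin_nonneg_of_nonneg_of_le_pi hθ0
      (hθ1.trans (by linarith [Real.pi_pos]))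
    have hsin : Real.sin θ ≤ Real.sqrt 2 / 2 := by
      have := Real.sin_le_sin_of_le_of_le_pi_div_two (by linarith [Real.pi_pos] : -(Real.pi/2) ≤ θ) (by linarith [Real.pi_pos]) hθ1
      rwa [Real.sin_pi_div_four] at this
    have hcos : 0 ≤ Real.cos (2 * θ) := Real.cos_nonneg_of_mem_Icc
      ⟨by linarith [Real.pi_pos], by linarith⟩
    have hRinv : 0 < 1 / R := by positivity
    have hRR : 0 ≤ R - 1 / R := by
      have : 1 / R ≤ 1 := by rw [div_le_one hR]; exact hR1
      linarith
    have key : 2 * x * (R - 1 / R) * Real.sin θ ≤ Real.sqrt 2 * x * R := by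
      have h1 : 2 * x * (R - 1 / R) * Real.sin θ ≤ 2 * x * (R - 1/R) * (Real.sqrt 2 / 2) := by
        apply mul_le_mul_of_nonneg_left hsin (by positivity)
      have h2 : 2 * x * (R - 1/R) * (Real.sqrt 2 / 2) ≤ Real.sqrt 2 * x * R := by
        nlinarith [mul_pos (mul_pos hs2pos hx) hRinv]
      linarith
    nlinarith [sq_nonneg (1/R)]
  · nlinarith [sq_nonneg (R - x), sq_nonneg (Real.sqrt 2 - 1), sq_nonneg (Real.sqrt 2 * (R - x))]
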